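/- Let X and P be operators on a finite-dimensional complex inner product space H with P self-adjoint. Then the range of P is contained in the range of X† (equivalently, in the support of X† ∘ X) if and only if there exists a self-adjoint operator Q on H such that P = X† ∘ Q ∘ X. -/

import Mathlib

open ContinuousLinearMap
open scoped ComplexInnerProductSpace

/-- Let `X`, `P` be operators on a finite-dimensional complex inner product space, with `P`
self-adjoint. Then `range P ⊆ range X†` (the support of `X† ∘ X`) if and only if
`P = X† ∘ Q ∘ X` for some self-adjoint `Q`. -/
theorem range_le_range_adjoint_iff_exists_sandwich
    {H : Type*} [NormedAddCommGroup H] [InnerProductSpace ℂ H] [FiniteDimensional ℂ H]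
    (X P : H →L[ℂ] H) (hP : IsSelfAdjoint P) :
    LinearMap.range (P : H →ₗ[ℂ] H) ≤ LinearMap.range (ContinuousLinearMap.adjoint X : H →ₗ[ℂ] H) ↔
      ∃ Q : H →L[ℂ] H, IsSelfAdjoint Q ∧
        P = ContinuousLinearMap.adjoint X ∘L Q ∘L X := by
  constructor
  · intro h
    set K : Submodule ℂ H := (LinearMap.ker (X : H →ₗ[ℂ] H))ᗮ with hKdef
    -- range X† ≤ K
    have hRA : ∀ w : H, ContinuousLinearMap.adjoint X w ∈ K := by
      intro w
      rw [hKdef, Submodule.mem_orthogonal]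
      intro u hu
      rw [ContinuousLinearMap.adjoint_inner_right]
      simp [show X u = 0 from LinearMap.mem_ker.mp hu]
    have hPK : ∀ x, P x ∈ K := fun x => by
      obtain ⟨w, hw⟩ := h (LinearMap.mem_range_self (P : H →ₗ[ℂ] H) x)
      rw [← (show ContinuousLinearMap.adjoint X w = P x from hw)]; exact hRA w
    -- ker X ≤ ker P
    have hkerXP : LinearMap.ker (X : H →ₗ[ℂ] H) ≤ LinearMap.ker (P : H →ₗ[ℂ] H) := by
      intro x hx
      have hx0 : (X : H →L[ℂ] H) x = 0 := hx
      have key : ⟪P x, P x⟫ = 0 := by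
        have h1 : ⟪P x, P x⟫ = ⟪x, P (P x)⟫ := by
          calc ⟪P x, P x⟫ = ⟪ContinuousLinearMap.adjoint P x, P x⟫ := by rw [hP.adjoint_eq]
            _ = ⟪x, P (P x)⟫ := ContinuousLinearMap.adjoint_inner_left P (P x) x
        obtain ⟨w, hw⟩ := h (LinearMap.mem_range_self (P : H →ₗ[ℂ] H) (P x))
        rw [h1, ← (show ContinuousLinearMap.adjoint X w = P (P x) from hw), ContinuousLinearMap.adjoint_inner_right, hx0, inner_zero_left]
      simpa using inner_self_eq_zero.mp key
    -- the equivalence K ≃ range X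
    have hXmem : ∀ x : K, (X : H →ₗ[ℂ] H) x ∈ LinearMap.range (X : H →ₗ[ℂ] H) :=
      fun x => LinearMap.mem_range_self _ _
    let f : K →ₗ[ℂ] LinearMap.range (X : H →ₗ[ℂ] H) :=
      LinearMap.codRestrict _ ((X : H →ₗ[ℂ] H).domRestrict K) hXmem
    have hf_inj : Function.Injective f := by
      intro x y hxy
      have hsub : ((x : H) - y) ∈ LinearMap.ker (X : H →ₗ[ℂ] H) := by
        have : (X : H →ₗ[ℂ] H) (x : H) = (X : H →ₗ[ℂ] H) (y : H) :=
          congrArg Subtype.val hxy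
        simp [LinearMap.mem_ker, map_sub, this]
      have hsubK : ((x : H) - y) ∈ K := K.sub_mem x.2 y.2
      have : ⟪(x : H) - y, (x : H) - y⟫ = 0 :=
        (Submodule.mem_orthogonal _ _).mp hsubK _ hsub
      have := inner_self_eq_zero.mp this
      exact Subtype.ext (sub_eq_zero.mp this)
    have hXproj : ∀ v : H, (X : H →L[ℂ] H) (Submodule.orthogonalProjection K v : H) = X v := by
      intro v
      have hKo : Kᗮ = LinearMap.ker (X : H →ₗ[ℂ] H) := Submodule.orthogonal_orthogonal _
      have hmem : v - (Submodule.orthogonalProjection K v : H) ∈ Kᗮ :=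
        Submodule.sub_starProjection_mem_orthogonal v
      rw [hKo] at hmem
      have : (X : H →L[ℂ] H) (v - (Submodule.orthogonalProjection K v : H)) = 0 := hmem
      rw [map_sub, sub_eq_zero] at this
      exact this.symm
    have hf_surj : Function.Surjective f := by
      rintro ⟨y, v, rfl⟩
      refine ⟨Submodule.orthogonalProjection K v, ?_⟩
      exact Subtype.ext (hXproj v)
    let e : K ≃ₗ[ℂ] LinearMap.range (X : H →ₗ[ℂ] H) :=
      LinearEquiv.ofBijective f ⟨hf_inj, hf_surj⟩
    let S : H →ₗ[ℂ] H :=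
      K.subtype ∘ₗ e.symm.toLinearMap ∘ₗ
        (Submodule.orthogonalProjection (LinearMap.range (X : H →ₗ[ℂ] H))).toLinearMap
    let S' : H →L[ℂ] H := LinearMap.toContinuousLinearMap S
    let π : H →L[ℂ] H := K.subtypeL ∘L Submodule.orthogonalProjection K
    have hSX : S' ∘L X = π := by
      ext v
      show S (X v) = (Submodule.orthogonalProjection K v : H)
      have h1 : Submodule.orthogonalProjection (LinearMap.range (X : H →ₗ[ℂ] H)) (X v)
          = ⟨X v, LinearMap.mem_range_self _ v⟩ :=
        Subtype.ext ((Submodule.starProjection_eq_self_iff (K := LinearMap.range (X : H →ₗ[ℂ] H))).mpr (LinearMap.mem_range_self _ v))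
      have h2 : e.symm ⟨X v, LinearMap.mem_range_self _ v⟩ = Submodule.orthogonalProjection K v := by
        rw [LinearEquiv.symm_apply_eq]
        exact (Subtype.ext (hXproj v)).symm
      show (K.subtype (e.symm (Submodule.orthogonalProjection _ (X v))) : H) = _
      rw [h1, h2]; rfl
    have hπ : IsSelfAdjoint π := isSelfAdjoint_starProjection K
    refine ⟨ContinuousLinearMap.adjoint S' ∘L P ∘L S', ?_, ?_⟩
    · rw [ContinuousLinearMap.isSelfAdjoint_iff']
      simp only [ContinuousLinearMap.adjoint_comp, ContinuousLinearMap.adjoint_adjoint,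
        hP.adjoint_eq, ContinuousLinearMap.comp_assoc]
    · have hcomp : ContinuousLinearMap.adjoint X ∘L
          (ContinuousLinearMap.adjoint S' ∘L P ∘L S') ∘L X
          = ContinuousLinearMap.adjoint (S' ∘L X) ∘L P ∘L (S' ∘L X) := by
        rw [ContinuousLinearMap.adjoint_comp]
        simp only [ContinuousLinearMap.comp_assoc]
      rw [hcomp, hSX, hπ.adjoint_eq]
      ext x
      have h1 : P (π x) = P x := by
        have : x - π x ∈ LinearMap.ker (P : H →ₗ[ℂ] H) := by
          apply hkerXP
          have hKo : Kᗮ = LinearMap.ker (X : H →ₗ[ℂ] H) := Submodule.orthogonal_orthogonal _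
          have hmem : x - (Submodule.orthogonalProjection K x : H) ∈ Kᗮ :=
            Submodule.sub_starProjection_mem_orthogonal x
          rw [hKo] at hmem
          exact hmem
        have hz : P (x - π x) = 0 := this
        rw [map_sub, sub_eq_zero] at hz
        exact hz.symm
      have h2 : π (P x) = P x := (Submodule.starProjection_eq_self_iff (K := K)).mpr (hPK x)
      show P x = π (P (π x))
      rw [h1, h2]
  · rintro ⟨Q, hQ, rfl⟩
    rintro y ⟨x, rfl⟩
    exact ⟨Q (X x), rfl⟩
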